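/- Each block of the Moreau projection of Ω(w) = (1/2)(Σ_t ‖w_t‖)² is a nonnegative scalar multiple of the corresponding block of the input: for the unique minimizer w* of (τ/2)‖w − g‖² + Ω(w), for every t there exists c_t ≥ 0 such that w*_t = c_t g_t (in particular w*_t is either 0 or parallel to g_t). -/

import Mathlib

lemma sum_update_aux {T : ℕ} (t : Fin T) (f : Fin T → ℝ) (b : ℝ) :
    ∑ s, Function.update f t b s = ∑ s, f s - f t + b := by
  rw [Finset.sum_update_of_mem (Finset.mem_univ t)]
  rw [show (Finset.univ : Finset (Fin T)) \ {t} = Finset.univ.erase t by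
    rw [Finset.sdiff_singleton_eq_erase]]
  have := Finset.sum_erase_add Finset.univ f (Finset.mem_univ t)
  linarith

/-- each block of the Moreau projection of Ω(w) = (1/2)(Σ_t ‖w_t‖)²
is a nonnegative multiple of the corresponding block of the input: if w* minimizes
(τ/2)‖w − g‖² + Ω(w), then for every t there is c_t ≥ 0 with w*_t = c_t • g_t. -/
theorem stmt9 (T B : ℕ) (τ : ℝ) (hτ : 0 < τ)
    (g wstar : Fin T → EuclideanSpace ℝ (Fin B))
    (F : (Fin T → EuclideanSpace ℝ (Fin B)) → ℝ)
    (hF : ∀ w, F w = (τ/2) * (∑ t, ‖w t - g t‖^2) + (1/2) * (∑ t, ‖w t‖)^2)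
    (hmin : ∀ w, F wstar ≤ F w) :
    ∀ t, ∃ c : ℝ, 0 ≤ c ∧ wstar t = c • g t := by
  intro t
  -- general computation of F on an updated point
  have hupd : ∀ v : EuclideanSpace ℝ (Fin B),
      F (Function.update wstar t v) =
        (τ/2) * ((∑ s, ‖wstar s - g s‖^2) - ‖wstar t - g t‖^2 + ‖v - g t‖^2)
        + (1/2) * ((∑ s, ‖wstar s‖) - ‖wstar t‖ + ‖v‖)^2 := by
    intro v
    rw [hF]
    have h1 : ∀ s, ‖Function.update wstar t v s - g s‖^2 =
        Function.update (fun s => ‖wstar s - g s‖^2) t (‖v - g t‖^2) s := by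
      intro s
      by_cases hs : s = t
      · subst hs; simp
      · simp [Function.update_apply, hs]
    have h2 : ∀ s, ‖Function.update wstar t v s‖ =
        Function.update (fun s => ‖wstar s‖) t (‖v‖) s := by
      intro s
      by_cases hs : s = t
      · subst hs; simp
      · simp [Function.update_apply, hs]
    rw [Finset.sum_congr rfl (fun s _ => h1 s), Finset.sum_congr rfl (fun s _ => h2 s),
      sum_update_aux, sum_update_aux]
  set r := ‖wstar t‖ with hr
  set S := ∑ s, ‖wstar s‖ with hS
  have hrS : r ≤ S := by
    apply Finset.single_le_sum (fun s _ => norm_nonneg (wstar s)) (Finset.mem_univ t)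
  have hr0 : 0 ≤ r := norm_nonneg _
  by_cases hg : g t = 0
  · -- compare with zeroing block t
    refine ⟨0, le_refl 0, ?_⟩
    have key := hmin (Function.update wstar t 0)
    rw [hupd 0, hF wstar] at key
    rw [hg] at key
    simp only [sub_zero, norm_zero] at key
    have hrz : r = 0 := by nlinarith [key, hrS, hr0, hτ]
    have : wstar t = 0 := norm_eq_zero.mp hrz
    rw [this, hg]; simp
  · -- g t ≠ 0
    have hGpos : 0 < ‖g t‖ := norm_pos_iff.mpr hg
    set c := r / ‖g t‖ with hc
    have hc0 : 0 ≤ c := div_nonneg hr0 hGpos.le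
    refine ⟨c, hc0, ?_⟩
    set v : EuclideanSpace ℝ (Fin B) := c • g t with hv
    have hnv : ‖v‖ = r := by
      rw [hv, norm_smul, Real.norm_eq_abs, abs_of_nonneg hc0, hc,
        div_mul_cancel₀ _ hGpos.ne']
    have key := hmin (Function.update wstar t v)
    rw [hupd v, hF wstar, hnv] at key
    have hle : ‖wstar t - g t‖^2 ≤ ‖v - g t‖^2 := by nlinarith [key, hτ]
    have e1 : ‖wstar t - g t‖^2 = r^2 - 2 * inner ℝ (wstar t) (g t) + ‖g t‖^2 := by
      rw [hr]; exact norm_sub_sq_real (wstar t) (g t)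
    have e2 : ‖v - g t‖^2 = r^2 - 2 * (r * ‖g t‖) + ‖g t‖^2 := by
      have : (inner ℝ v (g t) : ℝ) = r * ‖g t‖ := by
        rw [hv, real_inner_smul_left, real_inner_self_eq_norm_sq, hc]
        field_simp
      rw [norm_sub_sq_real v (g t), this, hnv]
    have hinner : (inner ℝ (wstar t) (g t) : ℝ) = r * ‖g t‖ := by
      have hCS := real_inner_le_norm (wstar t) (g t)
      rw [e1, e2] at hle
      rw [← hr] at hCS
      linarith
    have heq : ‖g t‖ • wstar t = ‖wstar t‖ • g t := by
      rw [← inner_eq_norm_mul_iff_real]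
      rw [hinner, hr]
    have : wstar t = (‖g t‖)⁻¹ • (r • g t) := by
      rw [← hr] at heq
      rw [← heq, smul_smul, inv_mul_cancel₀ hGpos.ne', one_smul]
    rw [this, smul_smul, hv, hc, inv_mul_eq_div]
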